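/- Let H₁ and H₂ be complex Hilbert spaces, (X₁,μ₁) and (X₂,μ₂) measure spaces with σ-finite positive measures, F₁, G₁ : X₁ → H₁ and F₂, G₂ : X₂ → H₂ continuous Bessel mappings, and m₁ : X₁ → ℂ, m₂ : X₂ → ℂ measurable essentially bounded functions. Let M₁ : H₁ → H₁ be the continuous Bessel multiplier of F₁ and G₁ with respect to m₁ and M₂ : H₂ → H₂ the continuous Bessel multiplier of F₂ and G₂ with respect to m₂. Then the continuous Bessel multiplier of F₁ ⊗ F₂ and G₁ ⊗ G₂ with respect to m(x₁,x₂) = m₁(x₁) m₂(x₂) factorizes as M₁ ⊗ M₂; concretely, for all f, f' ∈ H₁ and g, g' ∈ H₂, ∫_{X₁ × X₂} m₁(x₁) m₂(x₂) ⟨f, F₁(x₁)⟩₁ ⟨g, F₂(x₂)⟩₂ ⟨G₁(x₁), f'⟩₁ ⟨G₂(x₂), g'⟩₂ d(μ₁ × μ₂)(x₁,x₂) = ⟨M₁ f, f'⟩₁ ⟨M₂ g, g'⟩₂. -/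

import Mathlib

open MeasureTheory
open scoped ComplexInnerProductSpace ENNReal

/-- The continuous Bessel multiplier of `F₁ ⊗ F₂` and `G₁ ⊗ G₂` with
respect to `m(x₁,x₂) = m₁(x₁) m₂(x₂)` factorizes as `M₁ ⊗ M₂`: on elementary tensors,
`∫ m₁ m₂ ⟨f,F₁⟩⟨g,F₂⟩⟨G₁,f'⟩⟨G₂,g'⟩ d(μ₁ × μ₂) = ⟨M₁ f, f'⟩⟨M₂ g, g'⟩`. -/
theorem tensor_product_bessel_multiplier
    {H₁ : Type*} [NormedAddCommGroup H₁] [InnerProductSpace ℂ H₁] [CompleteSpace H₁]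
    {H₂ : Type*} [NormedAddCommGroup H₂] [InnerProductSpace ℂ H₂] [CompleteSpace H₂]
    {X₁ : Type*} [MeasurableSpace X₁] (μ₁ : Measure X₁) [SigmaFinite μ₁]
    {X₂ : Type*} [MeasurableSpace X₂] (μ₂ : Measure X₂) [SigmaFinite μ₂]
    (F₁ G₁ : X₁ → H₁) (F₂ G₂ : X₂ → H₂) (BF₁ BG₁ BF₂ BG₂ : ℝ)
    (hmeasF₁ : ∀ f : H₁, Measurable fun x => ⟪f, F₁ x⟫)
    (hmeasG₁ : ∀ f : H₁, Measurable fun x => ⟪f, G₁ x⟫)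
    (hmeasF₂ : ∀ g : H₂, Measurable fun x => ⟪g, F₂ x⟫)
    (hmeasG₂ : ∀ g : H₂, Measurable fun x => ⟪g, G₂ x⟫)
    (hBF₁ : ∀ f : H₁, ∫ x, ‖⟪f, F₁ x⟫‖ ^ 2 ∂μ₁ ≤ BF₁ * ‖f‖ ^ 2)
    (hBG₁ : ∀ f : H₁, ∫ x, ‖⟪f, G₁ x⟫‖ ^ 2 ∂μ₁ ≤ BG₁ * ‖f‖ ^ 2)
    (hBF₂ : ∀ g : H₂, ∫ x, ‖⟪g, F₂ x⟫‖ ^ 2 ∂μ₂ ≤ BF₂ * ‖g‖ ^ 2)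
    (hBG₂ : ∀ g : H₂, ∫ x, ‖⟪g, G₂ x⟫‖ ^ 2 ∂μ₂ ≤ BG₂ * ‖g‖ ^ 2)
    (m₁ : X₁ → ℂ) (m₂ : X₂ → ℂ)
    (hm₁meas : Measurable m₁) (hm₂meas : Measurable m₂)
    (hm₁ : MemLp m₁ ⊤ μ₁) (hm₂ : MemLp m₂ ⊤ μ₂)
    (M₁ : H₁ →L[ℂ] H₁) (M₂ : H₂ →L[ℂ] H₂)
    (hM₁ : ∀ f f' : H₁, ⟪M₁ f, f'⟫ = ∫ x, m₁ x * ⟪f, F₁ x⟫ * ⟪G₁ x, f'⟫ ∂μ₁)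
    (hM₂ : ∀ g g' : H₂, ⟪M₂ g, g'⟫ = ∫ x, m₂ x * ⟪g, F₂ x⟫ * ⟪G₂ x, g'⟫ ∂μ₂) :
    ∀ (f f' : H₁) (g g' : H₂),
      ∫ x, m₁ x.1 * m₂ x.2 * ⟪f, F₁ x.1⟫ * ⟪g, F₂ x.2⟫ *
          ⟪G₁ x.1, f'⟫ * ⟪G₂ x.2, g'⟫ ∂(μ₁.prod μ₂) =
        ⟪M₁ f, f'⟫ * ⟪M₂ g, g'⟫ := by
  intro f f' g g'
  rw [hM₁, hM₂, ← integral_prod_mul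
    (f := fun x₁ => m₁ x₁ * ⟪f, F₁ x₁⟫ * ⟪G₁ x₁, f'⟫)
    (g := fun x₂ => m₂ x₂ * ⟪g, F₂ x₂⟫ * ⟪G₂ x₂, g'⟫)]
  congr 1
  ext x
  ring
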